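/- Existence of a causally consistent, structurally fair linearization (Theorems 3 and 6): let V be a finite type, E_c a relation on V that is round-monotone for some ρ : V → ℕ, E_s an arbitrary relation on V, and E the union of E_c and E_s. Then there exists a strict linear order ≺ on V such that (i) E_c x y implies x ≺ y (causal consistency), and (ii) whenever E_s x y holds and there is no E-path from y back to x (i.e., the transitive closure of E does not relate y to x, so x and y lie in distinct strongly connected components), then x ≺ y (every enforceable evidence-backed precedence edge is preserved). -/

import Mathlib

/-- Existence of a causally consistent, structurally fair linearization:
given round-monotone causal edges `Ec` and arbitrary evidence edges `Es` on a
finite type, there is a strict linear order that extends `Ec` and preserves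
every enforceable `Es`-edge (one whose endpoints are not connected back by a
path in `Ec ∪ Es`, i.e., lie in distinct strongly connected components). -/
theorem fair_linearization_exists {V : Type*} [Fintype V]
    (Ec Es : V → V → Prop) (ρ : V → ℕ)
    (hmono : ∀ x y, Ec x y → ρ x < ρ y) :
    ∃ lt : V → V → Prop, IsStrictTotalOrder V lt ∧
      (∀ x y, Ec x y → lt x y) ∧
      (∀ x y, Es x y →
        ¬ Relation.TransGen (fun a b => Ec a b ∨ Es a b) y x → lt x y) := by
  classical
  set E : V → V → Prop := fun a b => Ec a b ∨ Es a b with hE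
  set p : V → V → Prop := Relation.ReflTransGen E with hp
  have ptrans : ∀ {a b c}, p a b → p b c → p a c := fun h1 h2 => h1.trans h2
  set σ : V → ℕ := fun x => (Finset.univ.filter (fun z => p z x ∧ ¬ p x z)).card with hσ
  -- σ is monotone along strict reachability
  have hσlt : ∀ x y, p x y → ¬ p y x → σ x < σ y := by
    intro x y hxy hyx
    apply Finset.card_lt_card
    constructor
    · intro z hz
      simp only [Finset.mem_filter, Finset.mem_univ, true_and] at hz ⊢
      exact ⟨ptrans hz.1 hxy, fun h => hz.2 (ptrans hxy h)⟩
    · intro hsub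
      have hx : x ∈ Finset.univ.filter (fun z => p z y ∧ ¬ p y z) := by
        simp only [Finset.mem_filter, Finset.mem_univ, true_and]
        exact ⟨hxy, hyx⟩
      have := hsub hx
      simp only [Finset.mem_filter, Finset.mem_univ, true_and] at this
      exact this.2 Relation.ReflTransGen.refl
  have hσeq : ∀ x y, p x y → p y x → σ x = σ y := by
    intro x y hxy hyx
    have : (Finset.univ.filter (fun z => p z x ∧ ¬ p x z)) =
        (Finset.univ.filter (fun z => p z y ∧ ¬ p y z)) := by
      ext z
      simp only [Finset.mem_filter, Finset.mem_univ, true_and]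
      constructor
      · rintro ⟨h1, h2⟩; exact ⟨ptrans h1 hxy, fun h => h2 (ptrans hxy h)⟩
      · rintro ⟨h1, h2⟩; exact ⟨ptrans h1 hyx, fun h => h2 (ptrans hyx h)⟩
    simp only [hσ, this]
  obtain ⟨e⟩ := Fintype.truncEquivFin V
  set ι : V → ℕ := fun x => (e x : ℕ) with hι
  have hιinj : Function.Injective ι := by
    intro a b h
    have : e a = e b := Fin.ext h
    exact e.injective this
  refine ⟨fun x y => σ x < σ y ∨ (σ x = σ y ∧ (ρ x < ρ y ∨ (ρ x = ρ y ∧ ι x < ι y))),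
    @IsStrictTotalOrder.mk _ _ ⟨?_⟩ (@IsStrictOrder.mk _ _ ⟨?_⟩ ⟨?_⟩), ?_, ?_⟩
  · -- trichotomy
    intro x y
    suffices htri : (σ x < σ y ∨ (σ x = σ y ∧ (ρ x < ρ y ∨ (ρ x = ρ y ∧ ι x < ι y)))) ∨ x = y ∨
        (σ y < σ x ∨ (σ y = σ x ∧ (ρ y < ρ x ∨ (ρ y = ρ x ∧ ι y < ι x)))) by
      intro h1 h2
      rcases htri with h | h | h
      · exact absurd h h1
      · exact h
      · exact absurd h h2
    rcases lt_trichotomy (σ x) (σ y) with h | h | h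
    · exact Or.inl (Or.inl h)
    · rcases lt_trichotomy (ρ x) (ρ y) with h' | h' | h'
      · exact Or.inl (Or.inr ⟨h, Or.inl h'⟩)
      · rcases lt_trichotomy (ι x) (ι y) with h'' | h'' | h''
        · exact Or.inl (Or.inr ⟨h, Or.inr ⟨h', h''⟩⟩)
        · exact Or.inr (Or.inl (hιinj h''))
        · exact Or.inr (Or.inr (Or.inr ⟨h.symm, Or.inr ⟨h'.symm, h''⟩⟩))
      · exact Or.inr (Or.inr (Or.inr ⟨h.symm, Or.inl h'⟩))
    · exact Or.inr (Or.inr (Or.inl h))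
  · -- irrefl
    intro x h
    rcases h with h | ⟨_, h | ⟨_, h⟩⟩ <;> exact lt_irrefl _ h
  · -- trans
    intro x y z hxy hyz
    rcases hxy with h1 | ⟨h1, h1'⟩ <;> rcases hyz with h2 | ⟨h2, h2'⟩
    · exact Or.inl (h1.trans h2)
    · exact Or.inl (h2 ▸ h1)
    · exact Or.inl (h1 ▸ h2)
    · refine Or.inr ⟨h1.trans h2, ?_⟩
      rcases h1' with h | ⟨h, h'⟩ <;> rcases h2' with g | ⟨g, g'⟩
      · exact Or.inl (h.trans g)
      · exact Or.inl (g ▸ h)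
      · exact Or.inl (h ▸ g)
      · exact Or.inr ⟨h.trans g, h'.trans g'⟩
  · -- Ec edges
    intro x y hxy
    have hpxy : p x y := Relation.ReflTransGen.single (Or.inl hxy)
    by_cases hyx : p y x
    · exact Or.inr ⟨hσeq x y hpxy hyx, Or.inl (hmono x y hxy)⟩
    · exact Or.inl (hσlt x y hpxy hyx)
  · -- enforceable Es edges
    intro x y hxy hnc
    have hpxy : p x y := Relation.ReflTransGen.single (Or.inr hxy)
    have hyx : ¬ p y x := by
      intro h
      rcases (Relation.reflTransGen_iff_eq_or_transGen.mp h) with rfl | h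
      · exact hnc (Relation.TransGen.single (Or.inr hxy))
      · exact hnc h
    exact Or.inl (hσlt x y hpxy hyx)
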